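/- Let G be a simple graph with a'(G) = η ≥ 2 and l ≥ 3. Then a'(G □ P_l) ≤ η + 2, where P_l is the path on l vertices. -/

import Mathlib

open SimpleGraph

/-- A proper edge colouring: edges sharing a vertex get distinct colours. -/
def IsProperEdgeColoring {V : Type*} (G : SimpleGraph V) {S : Type*} (c : Sym2 V → S) : Prop :=
  ∀ e₁ ∈ G.edgeSet, ∀ e₂ ∈ G.edgeSet, e₁ ≠ e₂ → (∃ x, x ∈ e₁ ∧ x ∈ e₂) → c e₁ ≠ c e₂

/-- An acyclic edge colouring: proper, and every cycle uses at least three colours. -/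
def IsAcyclicEdgeColoring {V : Type*} (G : SimpleGraph V) {S : Type*} (c : Sym2 V → S) : Prop :=
  IsProperEdgeColoring G c ∧
  ∀ (v : V) (w : G.Walk v v), w.IsCycle →
    ∃ e₁ ∈ w.edges, ∃ e₂ ∈ w.edges, ∃ e₃ ∈ w.edges,
      c e₁ ≠ c e₂ ∧ c e₁ ≠ c e₃ ∧ c e₂ ≠ c e₃

/-- The acyclic chromatic index: least number of colours in an acyclic edge colouring. -/
noncomputable def acyclicChromaticIndex {V : Type*} (G : SimpleGraph V) : ℕ :=
  sInf {n | ∃ c : Sym2 V → Fin n, IsAcyclicEdgeColoring G c}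

/-- A maximal bichromatic path with colour pair {a, b}: a path whose edges use exactly
the colours a and b, not extendable at either end within these colours. -/
def IsMaxBichromaticPath {V S : Type*} (G : SimpleGraph V) (c : Sym2 V → S)
    (a b : S) {u v : V} (w : G.Walk u v) : Prop :=
  w.IsPath ∧ a ≠ b ∧ (∀ e ∈ w.edges, c e = a ∨ c e = b) ∧
  a ∈ w.edges.map c ∧ b ∈ w.edges.map c ∧
  (∀ x, ∀ h : G.Adj x u, ¬((Walk.cons h w).IsPath ∧ (c s(x, u) = a ∨ c s(x, u) = b))) ∧
  (∀ y, ∀ h : G.Adj v y, ¬((w.concat h).IsPath ∧ (c s(v, y) = a ∨ c s(v, y) = b)))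

/-- The auxiliary graph: G plus an edge between the endpoints of every maximal
bichromatic path of the colouring c. -/
def auxGraph {V S : Type*} (G : SimpleGraph V) (c : Sym2 V → S) : SimpleGraph V where
  Adj u v := u ≠ v ∧ (G.Adj u v ∨
    ∃ a b, (∃ w : G.Walk u v, IsMaxBichromaticPath G c a b w) ∨
           (∃ w : G.Walk v u, IsMaxBichromaticPath G c a b w))
  symm := ⟨by
    rintro u v ⟨hne, h | ⟨a, b, h⟩⟩
    · exact ⟨hne.symm, Or.inl h.symm⟩
    · exact ⟨hne.symm, Or.inr ⟨a, b, h.symm⟩⟩⟩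
  loopless := ⟨fun v h => h.1 rfl⟩

/-- The number of maximal bichromatic paths having `v` as an endpoint. -/
noncomputable def maxBichromPathsAt {V S : Type*} (G : SimpleGraph V) (c : Sym2 V → S)
    (v : V) : ℕ :=
  {p : (u : V) × G.Walk v u | ∃ a b, IsMaxBichromaticPath G c a b p.2}.ncard

set_option maxHeartbeats 4000000

open SimpleGraph

section AuxLemmas
open List

lemma chain'_swap {β : Type*} {R : β → β → Prop} {A B : List β}
    (h : List.IsChain R (A ++ B))
    (hwrap : ∀ x ∈ (A ++ B).getLast?, ∀ y ∈ (A ++ B).head?, R x y) :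
    List.IsChain R (B ++ A) := by
  rcases eq_or_ne A [] with rfl | hA
  · simpa using h
  rcases eq_or_ne B [] with rfl | hB
  · simpa using h
  rw [List.isChain_append] at h ⊢
  obtain ⟨h1, h2, h3⟩ := h
  refine ⟨h2, h1, ?_⟩
  intro x hx y hy
  apply hwrap
  · rw [List.getLast?_append_of_ne_nil _ hB]; exact hx
  · rw [List.head?_append_of_ne_nil _ hA]; exact hy

lemma chain'_map_ne {β γ : Type*} (g : β → γ) (P : β → Prop) {l : List β}
    (hP : ∀ x ∈ l, P x) (hc : List.IsChain (· ≠ ·) l)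
    (hinj : ∀ x y, P x → P y → x ≠ y → g x ≠ g y) :
    List.IsChain (· ≠ ·) (l.map g) := by
  induction l with
  | nil => simp
  | cons a t ih =>
    cases t with
    | nil => simp
    | cons b t' =>
      rw [List.map_cons, List.map_cons, List.isChain_cons_cons]
      rw [List.isChain_cons_cons] at hc
      constructor
      · exact hinj a b (hP a (by simp)) (hP b (by simp)) hc.1
      · rw [← List.map_cons]
        exact ih (fun x hx => hP x (List.mem_cons_of_mem _ hx)) hc.2

variable {V : Type*} {G : SimpleGraph V}

namespace SimpleGraph.Walk

lemma edges_eq_nil_endpoints {u v : V} (p : G.Walk u v) (h : p.edges = []) : u = v := by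
  cases p with
  | nil => rfl
  | cons h' q => simp [Walk.edges_cons] at h

lemma start_mem_head_edge {u v : V} (p : G.Walk u v) {e : Sym2 V}
    (h : p.edges.head? = some e) : u ∈ e := by
  cases p with
  | nil => simp [Walk.edges_nil] at h
  | cons h' q =>
    rw [Walk.edges_cons, List.head?_cons, Option.some_inj] at h
    rw [← h]
    exact Sym2.mem_mk_left _ _

lemma end_mem_last_edge {u v : V} (p : G.Walk u v) {e : Sym2 V}
    (h : p.edges.getLast? = some e) : v ∈ e := by
  apply p.reverse.start_mem_head_edge
  rw [Walk.edges_reverse, List.head?_reverse]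
  exact h

lemma exists_concat {u v : V} (p : G.Walk u v) (h : p.edges ≠ []) :
    ∃ (z : V) (q : G.Walk u z) (ha : G.Adj z v), p = q.concat ha := by
  have hlen : 0 < p.length := by
    have := List.length_pos_iff.mpr h
    rwa [Walk.length_edges] at this
  have hn : ¬ p.reverse.Nil := by
    rw [Walk.not_nil_iff_lt_length, Walk.length_reverse]; exact hlen
  obtain ⟨z, ha, q, hq⟩ := Walk.not_nil_iff.mp hn
  refine ⟨z, q.reverse, ha.symm, ?_⟩
  have := congrArg Walk.reverse hq
  rwa [Walk.reverse_reverse, Walk.reverse_cons] at this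

lemma length_eq_one_of_isPath_edge_mem {u b : V} (q : G.Walk u b) (hq : q.IsPath)
    (he : s(u, b) ∈ q.edges) : q.length = 1 := by
  cases q with
  | nil => simp at he
  | cons h' q' =>
    rename_i z
    rw [Walk.edges_cons, List.mem_cons] at he
    have hq' := (Walk.cons_isPath_iff _ _).mp hq
    rcases he with he | he
    · have hbz : b = z := Sym2.congr_right.mp he
      subst hbz
      cases q' with
      | nil => simp
      | cons h'' q''' =>
        exfalso
        have hb : b ∈ q'''.support := Walk.end_mem_support _
        have := hq'.1.support_nodup
        rw [Walk.support_cons] at this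
        exact (List.nodup_cons.mp this).1 hb
    · exact absurd (Walk.fst_mem_support_of_mem_edges q' he) hq'.2

end SimpleGraph.Walk
end AuxLemmas


lemma pathGraph_no_cycle {l : ℕ} {v : Fin l} (w : (pathGraph l).Walk v v)
    (hw : w.IsCycle) : False := by
  classical
  have hsupne : w.support ≠ [] := w.support_ne_nil
  have htne : w.support.toFinset.Nonempty := by
    simp [List.toFinset_eq_empty_iff, hsupne, Finset.nonempty_iff_ne_empty]
  set M := w.support.toFinset.max' htne with hMdef
  have hMmem : M ∈ w.support := by
    have := w.support.toFinset.max'_mem htne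
    rwa [List.mem_toFinset] at this
  have hMax : ∀ x ∈ w.support, x ≤ M := fun x hx =>
    Finset.le_max' _ x (List.mem_toFinset.mpr hx)
  set w' := w.rotate M hMmem with hw'def
  have hrot := w.rotate_edges M hMmem
  have hnodup : w'.edges.Nodup := hrot.nodup_iff.mpr hw.isCircuit.isTrail.edges_nodup
  have hlen : w'.edges.length = w.edges.length := hrot.perm.length_eq
  have hlen3 : 3 ≤ w.length := hw.three_le_length
  have hwlen : 3 ≤ w'.length := by
    rw [← Walk.length_edges, hlen, Walk.length_edges]; exact hlen3
  have hne : ¬ w'.Nil := by rw [Walk.not_nil_iff_lt_length]; omega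
  obtain ⟨b, hb, p, hcons⟩ := Walk.not_nil_iff.mp hne
  have hedgesne : w'.edges ≠ [] := by
    intro hcon
    rw [hcon] at hlen
    have := Walk.length_edges w
    simp at hlen
    omega
  obtain ⟨z, q, hz, hconcat⟩ := w'.exists_concat hedgesne
  -- first edge and last edge
  have hfirst : w'.edges = s(M, b) :: p.edges := by rw [hcons, Walk.edges_cons]
  have hlast : w'.edges.getLast? = some s(z, M) := by
    rw [hconcat, Walk.edges_concat, List.concat_eq_append, List.getLast?_concat]
  -- first ≠ last
  have hpe : p.edges ≠ [] := by
    intro hcon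
    rw [hfirst, hcon] at hlen
    have := Walk.length_edges w
    simp at hlen
    omega
  have hfl : s(M, b) ≠ s(z, M) := by
    intro hcon
    have hmem : s(z, M) ∈ p.edges := by
      have h0 := hlast
      rw [hfirst, List.getLast?_eq_getLast_of_ne_nil (List.cons_ne_nil _ _),
        Option.some_inj] at h0
      rw [List.getLast_cons hpe] at h0
      exact h0 ▸ List.getLast_mem hpe
    rw [hfirst] at hnodup
    exact (List.nodup_cons.mp hnodup).1 (hcon ▸ hmem)
  -- membership of b and z in support + max
  have hbM : b ≠ M := fun hcon => (pathGraph l).irrefl (hcon ▸ hb)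
  have hzM : z ≠ M := fun hcon => (pathGraph l).irrefl (hcon ▸ hz)
  have hbmem : b ∈ w.support := by
    have h1 : b ∈ w'.support := by
      rw [hcons, Walk.support_cons]
      exact List.mem_cons_of_mem _ p.start_mem_support
    rcases List.mem_cons.mp (w'.support_eq_cons ▸ h1) with hcon | h2
    · exact absurd hcon hbM
    · have := (w.support_rotate M hMmem).mem_iff.mp h2
      exact List.mem_of_mem_tail this
  have hzmem : z ∈ w.support := by
    have h1 : z ∈ w'.support := by
      rw [hconcat, Walk.support_concat]
      exact List.mem_append_left _ q.end_mem_support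
    rcases List.mem_cons.mp (w'.support_eq_cons ▸ h1) with hcon | h2
    · exact absurd hcon hzM
    · have := (w.support_rotate M hMmem).mem_iff.mp h2
      exact List.mem_of_mem_tail this
  have hble : b ≤ M := hMax b hbmem
  have hzle : z ≤ M := hMax z hzmem
  have hadjb := pathGraph_adj.mp hb
  have hadjz := pathGraph_adj.mp hz
  rw [Fin.le_def] at hble hzle
  have hbv : b.val + 1 = M.val := by omega
  have hzv : z.val + 1 = M.val := by omega
  have hbz : b = z := Fin.ext (by omega)
  subst hbz
  exact hfl (by rw [Sym2.eq_swap])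


section Core
variable {V : Type*} {S : Type*} {G : SimpleGraph V} {c : Sym2 V → S}

lemma core_aux
    (hp : IsProperEdgeColoring G c)
    (hac : ∀ (v : V) (w : G.Walk v v), w.IsCycle →
      ∃ e₁ ∈ w.edges, ∃ e₂ ∈ w.edges, ∃ e₃ ∈ w.edges,
        c e₁ ≠ c e₂ ∧ c e₁ ≠ c e₃ ∧ c e₂ ≠ c e₃)
    (x y : S) :
    ∀ n : ℕ, ∀ (u : V) (W : G.Walk u u), W.length = n → W.edges ≠ [] →
      (∀ e ∈ W.edges, c e = x ∨ c e = y) → List.IsChain (· ≠ ·) W.edges → False := by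
  classical
  intro n
  induction n using Nat.strong_induction_on with
  | _ n IH =>
  intro u W hlen hne hcol hchain
  have hnil : ¬ W.Nil := by
    rw [Walk.not_nil_iff_lt_length]
    have := List.length_pos_iff.mpr hne
    rw [Walk.length_edges] at this
    exact this
  obtain ⟨b, hb, p, hcons⟩ := Walk.not_nil_iff.mp hnil
  have hedg : W.edges = s(u, b) :: p.edges := by rw [hcons, Walk.edges_cons]
  by_cases hpe : p.edges = []
  · exact G.loopless.irrefl u ((p.edges_eq_nil_endpoints hpe) ▸ hb)
  -- head and last edges
  set e₁ : Sym2 V := s(u, b) with he₁def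
  have hhead : W.edges.head? = some e₁ := by rw [hedg]; rfl
  have hlast' : W.edges.getLast? = some (W.edges.getLast hne) :=
    List.getLast?_eq_getLast_of_ne_nil hne
  set elast := W.edges.getLast hne with helastdef
  have hu₁ : u ∈ e₁ := Sym2.mem_mk_left _ _
  have hulast : u ∈ elast := W.end_mem_last_edge hlast'
  have he₁mem : e₁ ∈ W.edges := by rw [hedg]; exact List.mem_cons_self
  have helastmem : elast ∈ W.edges := List.getLast_mem hne
  have he₁set : e₁ ∈ G.edgeSet := W.edges_subset_edgeSet he₁mem
  have helastset : elast ∈ G.edgeSet := W.edges_subset_edgeSet helastmem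
  by_cases hcc : c elast = c e₁
  · -- strip case: first edge equals last edge
    have helast : elast = e₁ := by
      by_contra hne'
      exact hp elast helastset e₁ he₁set hne' ⟨u, hulast, hu₁⟩ hcc
    obtain ⟨z, q, ha, hconcat⟩ := p.exists_concat hpe
    have hedg2 : W.edges = e₁ :: (q.edges ++ [s(z, u)]) := by
      rw [hedg, hconcat, Walk.edges_concat, List.concat_eq_append]
    have hlastzu : elast = s(z, u) := by
      have : W.edges.getLast? = some s(z, u) := by
        rw [hedg2, show e₁ :: (q.edges ++ [s(z,u)]) = (e₁ :: q.edges) ++ [s(z,u)] by simp,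
          List.getLast?_concat]
      rw [hlast'] at this
      exact Option.some_inj.mp this
    have hzb : z = b := by
      have : s(z, u) = s(u, b) := by rw [← hlastzu, helast]
      rcases Sym2.eq_iff.mp this with ⟨h1, h2⟩ | ⟨h1, _⟩
      · exact absurd h2 hb.ne
      · exact h1
    subst hzb
    by_cases hqe : q.edges = []
    · -- length-2 walk: contradiction with chain'
      have : W.edges = [s(u,z), s(z,u)] := by rw [hedg2, hqe]; rfl
      rw [this] at hchain
      have := List.isChain_cons_cons.mp hchain
      exact this.1 (Sym2.eq_swap)
    · have hlq : q.length < n := by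
        have h1 : W.length = p.length + 1 := by rw [hcons]; simp
        have h2 : p.length = q.length + 1 := by rw [hconcat, Walk.length_concat]
        omega
      refine IH q.length hlq z q rfl hqe ?_ ?_
      · intro e he
        exact hcol e (by rw [hedg2]; exact List.mem_cons_of_mem _ (List.mem_append_left _ he))
      · have := (List.isChain_cons.mp (hedg2 ▸ hchain)).2
        exact this.left_of_append
  · -- cycle-or-split case
    have hwrap : elast ≠ e₁ := fun hcon => hcc (by rw [hcon])
    by_cases hnd : W.support.tail.Nodup
    · -- W is a cycle
      have hsupp : W.support.tail = p.support := by rw [hcons, Walk.support_cons]; rfl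
      have hppath : p.IsPath := Walk.IsPath.mk' (hsupp ▸ hnd)
      by_cases hmem : s(u, b) ∈ p.edges
      · -- short closed walk; contradiction
        have hrev : s(u, b) ∈ p.reverse.edges := by
          rw [Walk.edges_reverse, List.mem_reverse]; exact hmem
        have hlen1 := Walk.length_eq_one_of_isPath_edge_mem p.reverse hppath.reverse hrev
        rw [Walk.length_reverse] at hlen1
        have : p.edges.length = 1 := by rw [Walk.length_edges]; exact hlen1
        obtain ⟨f, hf⟩ := List.length_eq_one_iff.mp this
        have hfe : s(u, b) = f := by
          rw [hf] at hmem; simpa using hmem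
        have : elast = f := by
          have : W.edges.getLast? = some f := by
            rw [hedg, hf, show (s(u,b) :: [f]) = [s(u,b)] ++ [f] by simp, List.getLast?_concat]
          rw [hlast'] at this
          exact Option.some_inj.mp this
        exact hwrap (by rw [this, ← hfe])
      · -- genuine cycle
        have htrail : W.IsTrail := by
          constructor
          rw [hedg]
          exact List.nodup_cons.mpr ⟨hmem, hppath.edges_nodup⟩
        have hWnil : W ≠ Walk.nil := by
          intro hcon; rw [hcon] at hne; simp at hne
        have hcyc : W.IsCycle := ⟨⟨htrail, hWnil⟩, hnd⟩
        obtain ⟨a₁, ha₁, a₂, ha₂, a₃, ha₃, h12, h13, h23⟩ := hac u W hcyc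
        rcases hcol a₁ ha₁ with h1 | h1 <;> rcases hcol a₂ ha₂ with h2 | h2 <;>
          rcases hcol a₃ ha₃ with h3 | h3 <;>
          first
            | exact h12 (h1.trans h2.symm)
            | exact h13 (h1.trans h3.symm)
            | exact h23 (h2.trans h3.symm)
    · -- split at a repeated vertex
      have split : ∀ (z : V) (W₂ : G.Walk z z), W₂.length = n →
          2 ≤ W₂.support.tail.count z → (∀ e ∈ W₂.edges, c e = x ∨ c e = y) →
          List.IsChain (· ≠ ·) W₂.edges → False := by
        intro z W₂ hlen₂ hcount hcol₂ hchain₂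
        have hnil₂ : ¬ W₂.Nil := by
          rw [Walk.not_nil_iff_lt_length]
          by_contra hcon
          push_neg at hcon
          interval_cases h : W₂.length
          · have : W₂.support.tail.length = 0 := by
              have := W₂.length_support
              rw [h] at this
              have ht := W₂.support_eq_cons
              rw [ht] at this
              simpa using this
            rw [List.length_eq_zero_iff] at this
            rw [this] at hcount
            simp at hcount
        obtain ⟨b₂, hb₂, p₂, hcons₂⟩ := Walk.not_nil_iff.mp hnil₂
        have hcount₂ : 2 ≤ p₂.support.count z := by
          have : W₂.support.tail = p₂.support := by rw [hcons₂, Walk.support_cons]; rfl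
          rwa [this] at hcount
        have hzp : z ∈ p₂.support := by
          rw [← List.count_pos_iff]
          omega
        set T₂ := p₂.takeUntil z hzp with hT₂
        set D₂ := p₂.dropUntil z hzp with hD₂
        have hspec : T₂.append D₂ = p₂ := p₂.take_spec hzp
        have hcT : T₂.support.count z = 1 := p₂.count_support_takeUntil_eq_one hzp
        have hsupp₂ : p₂.support = T₂.support ++ D₂.support.tail := by
          rw [← hspec, Walk.support_append]
        have hcD : 1 ≤ D₂.support.tail.count z := by
          rw [hsupp₂, List.count_append] at hcount₂
          omega
        have hDlen : 1 ≤ D₂.length := by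
          have h1 : D₂.support.tail ≠ [] := by
            intro hcon; rw [hcon] at hcD; simp at hcD
          have h2 : D₂.support.tail.length + 1 = D₂.length + 1 := by
            rw [← D₂.length_support]
            rw [D₂.support_eq_cons]
            simp
          have h3 := List.length_pos_iff.mpr h1
          omega
        have hlenW₁ : (Walk.cons hb₂ T₂).length < n := by
          have h1 : W₂.length = p₂.length + 1 := by rw [hcons₂]; simp
          have h2 : p₂.length = T₂.length + D₂.length := by
            rw [← hspec, Walk.length_append]
          simp only [Walk.length_cons]
          omega
        have hedg₂ : W₂.edges = s(z, b₂) :: (T₂.edges ++ D₂.edges) := by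
          rw [hcons₂, Walk.edges_cons, ← hspec, Walk.edges_append]
        refine IH (Walk.cons hb₂ T₂).length hlenW₁ z (Walk.cons hb₂ T₂) rfl
          (by simp [Walk.edges_cons]) ?_ ?_
        · intro e he
          rw [Walk.edges_cons, List.mem_cons] at he
          refine hcol₂ e ?_
          rw [hedg₂, List.mem_cons]
          rcases he with he | he
          · exact Or.inl he
          · exact Or.inr (List.mem_append_left _ he)
        · rw [Walk.edges_cons]
          have : s(z, b₂) :: (T₂.edges ++ D₂.edges) = (s(z, b₂) :: T₂.edges) ++ D₂.edges := by
            simp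
          rw [hedg₂, this] at hchain₂
          exact hchain₂.left_of_append
      obtain ⟨z, hzdup⟩ := List.exists_duplicate_iff_not_nodup.mpr hnd
      have hzcount : 2 ≤ W.support.tail.count z := List.duplicate_iff_two_le_count.mp hzdup
      by_cases hz : z = u
      · exact split u W hlen (hz ▸ hzcount) hcol hchain
      · have hzmem : z ∈ W.support := List.mem_of_mem_tail hzdup.mem
        set T := W.takeUntil z hzmem with hT
        set D := W.dropUntil z hzmem with hD
        have hspec : T.append D = W := W.take_spec hzmem
        have hWedges : W.edges = T.edges ++ D.edges := by
          rw [← hspec, Walk.edges_append]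
        set W' := D.append T with hW'
        have hW'edges : W'.edges = D.edges ++ T.edges := Walk.edges_append _ _
        -- chain' for W'
        have hchain' : List.IsChain (· ≠ ·) W'.edges := by
          rw [hW'edges]
          apply chain'_swap (hWedges ▸ hchain)
          intro a hae b' hbe
          rw [← hWedges] at hae hbe
          rw [hlast'] at hae
          rw [hhead] at hbe
          simp only [Option.mem_def, Option.some_inj] at hae hbe
          exact hae ▸ hbe ▸ hwrap
        -- counts
        have hcT : T.support.count z = 1 := W.count_support_takeUntil_eq_one hzmem
        have hsuppW : W.support = T.support ++ D.support.tail := by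
          rw [← hspec, Walk.support_append]
        have hcWs : 2 ≤ W.support.count z := by
          rw [W.support_eq_cons, List.count_cons_of_ne (Ne.symm hz)]
          exact hzcount
        have hcD : 1 ≤ D.support.tail.count z := by
          rw [hsuppW, List.count_append] at hcWs
          omega
        have hzT : z ∈ T.support.tail := by
          have h1 : z ∈ T.support := T.end_mem_support
          rcases List.mem_cons.mp (T.support_eq_cons ▸ h1) with hcon | h2
          · exact absurd hcon hz
          · exact h2
        have hcount' : 2 ≤ W'.support.tail.count z := by
          have h1 : W'.support = D.support ++ T.support.tail := Walk.support_append _ _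
          have h2 : W'.support.tail = D.support.tail ++ T.support.tail := by
            rw [h1, D.support_eq_cons]; rfl
          rw [h2, List.count_append]
          have h3 : 0 < T.support.tail.count z := List.count_pos_iff.mpr hzT
          omega
        have hlen' : W'.length = n := by
          have h1 : T.length + D.length = n := by
            rw [← hlen, ← hspec, Walk.length_append]
          rw [Walk.length_append]
          omega
        refine split z W' hlen' hcount' ?_ hchain'
        intro e he
        refine hcol e ?_
        rw [hW'edges, List.mem_append] at he
        rw [hWedges, List.mem_append]
        tauto

end Core


section Product
variable {α : Type*} {l η : ℕ}

def shiftF (η : ℕ) [NeZero η] {l : ℕ} (k : Fin l) : Fin η :=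
  if k.val % 2 = 0 then 0 else 1

def pcol [NeZero η] (c : Sym2 α → Fin η) : Sym2 (α × Fin l) → Fin (η + 2) :=
  Sym2.lift ⟨fun u v =>
    if u.2 = v.2 then Fin.castLE (by omega) (c s(u.1, v.1) + shiftF η u.2)
    else if min u.2.1 v.2.1 % 2 = 0 then ⟨η, by omega⟩ else ⟨η + 1, by omega⟩, by
    intro u v
    dsimp only
    by_cases h : u.2 = v.2
    · rw [if_pos h, if_pos h.symm, Sym2.eq_swap, h]
    · rw [if_neg h, if_neg (Ne.symm h), min_comm]⟩

lemma pcol_H [NeZero η] (c : Sym2 α → Fin η) (a b : α) (k : Fin l) :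
    pcol c s((a, k), (b, k)) = Fin.castLE (by omega) (c s(a, b) + shiftF η k) := by
  simp [pcol]

lemma pcol_V [NeZero η] (c : Sym2 α → Fin η) (a b : α) {i j : Fin l} (h : i ≠ j) :
    pcol c s((a, i), (b, j)) =
      if min i.1 j.1 % 2 = 0 then (⟨η, by omega⟩ : Fin (η + 2)) else ⟨η + 1, by omega⟩ := by
  rw [pcol, Sym2.lift_mk]
  exact if_neg h

lemma pcol_H_lt [NeZero η] (c : Sym2 α → Fin η) (a b : α) (k : Fin l) :
    (pcol c s((a, k), (b, k))).val < η := by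
  rw [pcol_H]
  simpa using (c s(a, b) + shiftF η k).isLt

lemma pcol_V_ge [NeZero η] (c : Sym2 α → Fin η) (a b : α) {i j : Fin l} (h : i ≠ j) :
    η ≤ (pcol c s((a, i), (b, j))).val := by
  rw [pcol_V c a b h]
  split
  · exact le_refl η
  · exact Nat.le_succ η

lemma shiftF_ne [NeZero η] (h2 : 2 ≤ η) {i j : Fin l} (h : (pathGraph l).Adj i j) :
    shiftF η i ≠ shiftF η j := by
  have hv := pathGraph_adj.mp h
  have h1 : (1 : Fin η).val = 1 := by
    rw [Fin.val_one']
    exact Nat.mod_eq_of_lt (by omega)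
  have h0 : (0 : Fin η).val = 0 := rfl
  unfold shiftF
  split <;> split <;> intro hcon
  · omega
  · rw [Fin.ext_iff, h0, h1] at hcon; omega
  · rw [Fin.ext_iff, h1, h0] at hcon; omega
  · omega

lemma pcol_proper [NeZero η] {G : SimpleGraph α} {c : Sym2 α → Fin η}
    (hc : IsProperEdgeColoring G c) :
    IsProperEdgeColoring (G □ pathGraph l) (pcol (l := l) c) := by
  rintro e₁ h₁ e₂ h₂ hne ⟨xx, hx₁, hx₂⟩
  obtain ⟨y₁, rfl⟩ := Sym2.mem_iff_exists.mp hx₁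
  obtain ⟨y₂, rfl⟩ := Sym2.mem_iff_exists.mp hx₂
  rw [SimpleGraph.mem_edgeSet] at h₁ h₂
  obtain ⟨m, k⟩ := xx
  obtain ⟨b₁, j₁⟩ := y₁
  obtain ⟨b₂, j₂⟩ := y₂
  rw [SimpleGraph.boxProd_adj] at h₁ h₂
  rcases h₁ with ⟨hG₁, hk₁⟩ | ⟨hP₁, hk₁⟩
  · rcases h₂ with ⟨hG₂, hk₂⟩ | ⟨hP₂, hk₂⟩
    · -- both horizontal
      dsimp only at hG₁ hG₂ hk₁ hk₂
      subst hk₁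
      subst hk₂
      intro hcon
      rw [pcol_H, pcol_H] at hcon
      have heq := Fin.castLE_injective (by omega) hcon
      have heq2 : c s(m, b₁) = c s(m, b₂) := add_right_cancel heq
      have hbne : b₁ ≠ b₂ := by
        intro hcon2
        exact hne (by rw [hcon2])
      exact hc s(m, b₁) (G.mem_edgeSet.mpr hG₁) s(m, b₂)
        (G.mem_edgeSet.mpr hG₂)
        (fun hcc => hbne (Sym2.congr_right.mp hcc))
        ⟨m, Sym2.mem_mk_left _ _, Sym2.mem_mk_left _ _⟩ heq2
    · -- horizontal vs vertical
      dsimp only at hG₁ hP₂ hk₁ hk₂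
      subst hk₁
      subst hk₂
      intro hcon
      have hv1 := pcol_H_lt c m b₁ k
      have hv2 := pcol_V_ge c m m hP₂.ne
      rw [hcon] at hv1
      omega
  · rcases h₂ with ⟨hG₂, hk₂⟩ | ⟨hP₂, hk₂⟩
    · dsimp only at hP₁ hG₂ hk₁ hk₂
      subst hk₁
      subst hk₂
      intro hcon
      have hv1 := pcol_V_ge c m m hP₁.ne
      have hv2 := pcol_H_lt c m b₂ k
      rw [← hcon] at hv2
      omega
    · -- both vertical
      dsimp only at hP₁ hP₂ hk₁ hk₂
      subst hk₁
      subst hk₂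
      intro hcon
      have hjne : j₁ ≠ j₂ := by
        intro hcon2
        exact hne (by rw [hcon2])
      rw [pcol_V c m m hP₁.ne, pcol_V c m m hP₂.ne] at hcon
      have ha₁ := pathGraph_adj.mp hP₁
      have ha₂ := pathGraph_adj.mp hP₂
      have hjv : j₁.val ≠ j₂.val := fun hcc => hjne (Fin.ext hcc)
      have hm : min k.val j₁.val % 2 ≠ min k.val j₂.val % 2 := by
        rcases ha₁ with ha | ha <;> rcases ha₂ with hb | hb
        · rw [min_eq_left (by omega : k.val ≤ j₁.val),
            min_eq_left (by omega : k.val ≤ j₂.val)]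
          omega
        · rw [min_eq_left (by omega : k.val ≤ j₁.val),
            min_eq_right (by omega : j₂.val ≤ k.val)]
          omega
        · rw [min_eq_right (by omega : j₁.val ≤ k.val),
            min_eq_left (by omega : k.val ≤ j₂.val)]
          omega
        · rw [min_eq_right (by omega : j₁.val ≤ k.val),
            min_eq_right (by omega : j₂.val ≤ k.val)]
          omega
      by_cases hc1 : min k.val j₁.val % 2 = 0 <;> by_cases hc2 : min k.val j₂.val % 2 = 0
      · exact hm (hc1.trans hc2.symm)
      · rw [if_pos hc1, if_neg hc2] at hcon
        have := congrArg Fin.val hcon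
        simp at this
      · rw [if_neg hc1, if_pos hc2] at hcon
        have := congrArg Fin.val hcon
        simp at this
      · omega

end Product


section Proj
variable {α : Type*} {l : ℕ} {G : SimpleGraph α}

lemma head?_mem' {β : Type*} {L : List β} {e : β} (h : L.head? = some e) : e ∈ L := by
  cases L with
  | nil => simp at h
  | cons a t => simp at h; simp [h]

/-- Projection of an all-horizontal walk. -/
lemma projA : ∀ {a b : α × Fin l} (p : (G □ pathGraph l).Walk a b),
    (∀ e ∈ p.edges, (Sym2.map Prod.snd e).IsDiag) →
    (b.2 = a.2) ∧ (∀ e ∈ p.edges, ∃ x y : α, e = s((x, a.2), (y, a.2))) ∧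
    ∃ q : G.Walk a.1 b.1, q.edges = p.edges.map (Sym2.map Prod.fst) := by
  intro a b p
  induction p with
  | nil => exact fun _ => ⟨rfl, by simp, ⟨Walk.nil, by simp⟩⟩
  | @cons a v b h q ih =>
    intro hAll
    have h₀ : (Sym2.map Prod.snd s(a, v)).IsDiag := hAll _ (by simp [Walk.edges_cons])
    rw [Sym2.map_pair_eq, Sym2.mk_isDiag_iff] at h₀
    have hG : G.Adj a.1 v.1 := by
      rcases SimpleGraph.boxProd_adj.mp h with ⟨hG, _⟩ | ⟨hP, _⟩
      · exact hG
      · exact absurd (h₀ ▸ hP) ((pathGraph l).irrefl)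
    obtain ⟨hb2, hforms, q', hq'⟩ := ih (fun e he => hAll e (by simp [Walk.edges_cons, he]))
    refine ⟨by rw [hb2, h₀], ?_, ?_⟩
    · intro e he
      rw [Walk.edges_cons, List.mem_cons] at he
      rcases he with rfl | he
      · exact ⟨a.1, v.1, by
          rw [show ((v.1, a.2) : α × Fin l) = v from by rw [h₀]]⟩
      · obtain ⟨x, y, hxy⟩ := hforms e he
        exact ⟨x, y, by rw [hxy, h₀]⟩
    · refine ⟨Walk.cons hG q', ?_⟩
      rw [Walk.edges_cons, hq', Walk.edges_cons, List.map_cons, Sym2.map_pair_eq]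

/-- Projection of an all-vertical walk. -/
lemma projV : ∀ {a b : α × Fin l} (p : (G □ pathGraph l).Walk a b),
    (∀ e ∈ p.edges, ¬ (Sym2.map Prod.snd e).IsDiag) →
    (b.1 = a.1) ∧ (∀ e ∈ p.edges, ∃ i j : Fin l, i ≠ j ∧ e = s((a.1, i), (a.1, j))) ∧
    ∃ q : (pathGraph l).Walk a.2 b.2, q.edges = p.edges.map (Sym2.map Prod.snd) := by
  intro a b p
  induction p with
  | nil => exact fun _ => ⟨rfl, by simp, ⟨Walk.nil, by simp⟩⟩
  | @cons a v b h q ih =>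
    intro hAll
    have h₀ : ¬ (Sym2.map Prod.snd s(a, v)).IsDiag := hAll _ (by simp [Walk.edges_cons])
    rw [Sym2.map_pair_eq, Sym2.mk_isDiag_iff] at h₀
    have hV : a.1 = v.1 ∧ (pathGraph l).Adj a.2 v.2 := by
      rcases SimpleGraph.boxProd_adj.mp h with ⟨_, h2⟩ | ⟨hP, h2⟩
      · exact absurd h2 h₀
      · exact ⟨h2, hP⟩
    obtain ⟨hb1, hforms, q', hq'⟩ := ih (fun e he => hAll e (by simp [Walk.edges_cons, he]))
    refine ⟨by rw [hb1, hV.1], ?_, ?_⟩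
    · intro e he
      rw [Walk.edges_cons, List.mem_cons] at he
      rcases he with rfl | he
      · refine ⟨a.2, v.2, h₀, ?_⟩
        rw [show ((a.1, v.2) : α × Fin l) = v from by rw [hV.1]]
      · obtain ⟨i, j, hij, hxy⟩ := hforms e he
        exact ⟨i, j, hij, by rw [hxy, hV.1]⟩
    · refine ⟨Walk.cons hV.2 q', ?_⟩
      rw [Walk.edges_cons, hq', Walk.edges_cons, List.map_cons, Sym2.map_pair_eq]

end Proj


section Mixed
variable {α : Type*} {l η : ℕ}

lemma projM [NeZero η] (h2 : 2 ≤ η) {G : SimpleGraph α} {c : Sym2 α → Fin η}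
    (hprop : IsProperEdgeColoring (G □ pathGraph l) (pcol c))
    (x' : Fin η) (y : Fin (η + 2)) (hy : η ≤ y.val) :
    ∀ {a b : α × Fin l} (p : (G □ pathGraph l).Walk a b),
    (∀ e ∈ p.edges, pcol c e = Fin.castLE (by omega) x' ∨ pcol c e = y) →
    List.IsChain (· ≠ ·) p.edges →
    ∃ q : G.Walk a.1 b.1,
      q.edges = p.edges.filterMap (fun e =>
        if (Sym2.map Prod.snd e).IsDiag then some (Sym2.map Prod.fst e) else none) ∧
      List.IsChain (fun e f => c e ≠ c f) q.edges ∧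
      ∀ e, q.edges.head? = some e →
        ∃ k : Fin l, c e + shiftF η k = x' ∧
          ∃ v : α × Fin l, p.edges.head? = some s(a, v) ∧
            ((a.2 = v.2 ∧ k = a.2) ∨ (a.2 ≠ v.2 ∧ k = v.2)) := by
  have hcastval : ∀ z : Fin η, (Fin.castLE (by omega : η ≤ η + 2) z).val = z.val :=
    fun z => rfl
  intro a b p
  induction p with
  | nil => exact fun _ _ => ⟨Walk.nil, by simp, by simp, by simp⟩
  | @cons a v b h q ih =>
    intro hcol hchain
    have hcol' : ∀ e ∈ q.edges, pcol c e = Fin.castLE (by omega) x' ∨ pcol c e = y :=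
      fun e he => hcol e (by rw [Walk.edges_cons]; exact List.mem_cons_of_mem _ he)
    have hchainc := List.isChain_cons.mp (by rwa [Walk.edges_cons] at hchain)
    obtain ⟨q', hq'edges, hq'chain, hq'head⟩ := ih hcol' hchainc.2
    have hEmem : s(a, v) ∈ (Walk.cons h q).edges := by
      rw [Walk.edges_cons]; exact List.mem_cons_self
    have hEset : s(a, v) ∈ (G □ pathGraph l).edgeSet := ((G □ pathGraph l).mem_edgeSet.mpr h)
    by_cases hs : a.2 = v.2
    · -- horizontal step
      have hG : G.Adj a.1 v.1 := by
        rcases SimpleGraph.boxProd_adj.mp h with ⟨hG, _⟩ | ⟨hP, _⟩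
        · exact hG
        · exact absurd (hs ▸ hP) ((pathGraph l).irrefl)
      have hveq : ((v.1, a.2) : α × Fin l) = v := by rw [hs]
      have hEcol : pcol c s(a, v) = Fin.castLE (by omega) (c s(a.1, v.1) + shiftF η a.2) := by
        have := pcol_H (l := l) c a.1 v.1 a.2
        rwa [show ((a.1, a.2) : α × Fin l) = a from rfl, hveq] at this
      have hExx : pcol c s(a, v) = Fin.castLE (by omega) x' := by
        rcases hcol _ hEmem with hc | hc
        · exact hc
        · exfalso
          have h1 := congrArg Fin.val (hEcol.symm.trans hc)
          rw [hcastval] at h1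
          have := (c s(a.1, v.1) + shiftF η a.2).isLt
          omega
      have hEc : c s(a.1, v.1) + shiftF η a.2 = x' :=
        Fin.castLE_injective (by omega) (hEcol.symm.trans hExx)
      refine ⟨Walk.cons hG q', ?_, ?_, ?_⟩
      · rw [Walk.edges_cons, Walk.edges_cons, List.filterMap_cons, hq'edges]
        have : (Sym2.map Prod.snd s(a, v)).IsDiag := by
          rw [Sym2.map_pair_eq, Sym2.mk_isDiag_iff]; exact hs
        rw [if_pos this, Sym2.map_pair_eq]
      · rw [Walk.edges_cons]
        refine List.isChain_cons.mpr ⟨?_, hq'chain⟩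
        intro f hf
        obtain ⟨k₁, hsum, w, hqh, hdisj⟩ := hq'head f hf
        have hFmem : s(v, w) ∈ q.edges := head?_mem' hqh
        have hFset : s(v, w) ∈ (G □ pathGraph l).edgeSet := q.edges_subset_edgeSet hFmem
        have hne : s(a, v) ≠ s(v, w) := by
          have := hchainc.1 s(v, w) (by rw [hqh]; rfl)
          exact this
        rcases hdisj with ⟨hw, hk⟩ | ⟨hw, hk⟩
        · -- q starts horizontally in the same layer: impossible by properness
          exfalso
          have hweq : ((w.1, v.2) : α × Fin l) = w := by rw [hw]
          have hFcol : pcol c s(v, w) =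
              Fin.castLE (by omega) (c s(v.1, w.1) + shiftF η v.2) := by
            have := pcol_H (l := l) c v.1 w.1 v.2
            rwa [show ((v.1, v.2) : α × Fin l) = v from rfl, hweq] at this
          have hFxx : pcol c s(v, w) = Fin.castLE (by omega) x' := by
            rcases hcol' _ hFmem with hc | hc
            · exact hc
            · exfalso
              have h1 := congrArg Fin.val (hFcol.symm.trans hc)
              rw [hcastval] at h1
              have := (c s(v.1, w.1) + shiftF η v.2).isLt
              omega
          exact hprop s(a, v) hEset s(v, w) hFset hne
            ⟨v, Sym2.mem_mk_right _ _, Sym2.mem_mk_left _ _⟩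
            (hExx.trans hFxx.symm)
        · -- q starts vertically: shifts differ
          have hPadj : (pathGraph l).Adj v.2 w.2 := by
            rcases SimpleGraph.boxProd_adj.mp ((G □ pathGraph l).mem_edgeSet.mp hFset) with
              ⟨_, h2'⟩ | ⟨hP, _⟩
            · exact absurd h2' hw
            · exact hP
          have hshift : shiftF η a.2 ≠ shiftF η k₁ := by
            rw [hk, hs]
            exact shiftF_ne h2 hPadj
          intro hcc
          rw [hcc] at hEc
          rw [← hsum] at hEc
          exact hshift (add_left_cancel hEc)
      · intro e he
        rw [Walk.edges_cons, List.head?_cons, Option.some_inj] at he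
        subst he
        exact ⟨a.2, hEc, v, by rw [Walk.edges_cons]; rfl, Or.inl ⟨hs, rfl⟩⟩
    · -- vertical step
      have hV : a.1 = v.1 ∧ (pathGraph l).Adj a.2 v.2 := by
        rcases SimpleGraph.boxProd_adj.mp h with ⟨_, h2'⟩ | ⟨hP, h2'⟩
        · exact absurd h2' hs
        · exact ⟨h2', hP⟩
      refine ⟨q'.copy hV.1.symm rfl, ?_, ?_, ?_⟩
      · rw [Walk.edges_copy, Walk.edges_cons, List.filterMap_cons, hq'edges]
        have : ¬ (Sym2.map Prod.snd s(a, v)).IsDiag := by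
          rw [Sym2.map_pair_eq, Sym2.mk_isDiag_iff]; exact hs
        rw [if_neg this]
      · rw [Walk.edges_copy]; exact hq'chain
      · intro e he
        rw [Walk.edges_copy] at he
        obtain ⟨k₁, hsum, w, hqh, hdisj⟩ := hq'head e he
        have hFmem : s(v, w) ∈ q.edges := head?_mem' hqh
        have hFset : s(v, w) ∈ (G □ pathGraph l).edgeSet := q.edges_subset_edgeSet hFmem
        rcases hdisj with ⟨hw, hk⟩ | ⟨hw, hk⟩
        · exact ⟨k₁, hsum, v, by rw [Walk.edges_cons]; rfl, Or.inr ⟨hs, by rw [hk]⟩⟩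
        · -- two consecutive vertical edges: impossible
          exfalso
          have hne : s(a, v) ≠ s(v, w) := hchainc.1 s(v, w) (by rw [hqh]; rfl)
          have hEy : pcol c s(a, v) = y := by
            rcases hcol _ hEmem with hc | hc
            · exfalso
              have hge : η ≤ (pcol c s(a, v)).val := by
                have := pcol_V_ge (l := l) c a.1 v.1 (i := a.2) (j := v.2) hs
                rwa [show ((a.1, a.2) : α × Fin l) = a from rfl,
                  show ((v.1, v.2) : α × Fin l) = v from rfl] at this
              rw [hc] at hge
              rw [hcastval] at hge
              have := x'.isLt
              omega
            · exact hc
          have hFy : pcol c s(v, w) = y := by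
            rcases hcol' _ hFmem with hc | hc
            · exfalso
              have hge : η ≤ (pcol c s(v, w)).val := by
                have := pcol_V_ge (l := l) c v.1 w.1 (i := v.2) (j := w.2) hw
                rwa [show ((v.1, v.2) : α × Fin l) = v from rfl,
                  show ((w.1, w.2) : α × Fin l) = w from rfl] at this
              rw [hc] at hge
              rw [hcastval] at hge
              have := x'.isLt
              omega
            · exact hc
          exact hprop s(a, v) hEset s(v, w) hFset hne
            ⟨v, Sym2.mem_mk_right _ _, Sym2.mem_mk_left _ _⟩
            (hEy.trans hFy.symm)

end Mixed


section PathCol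
variable {l : ℕ} {α : Type*}

def cP (l : ℕ) : Sym2 (Fin l) → Fin 2 :=
  Sym2.lift ⟨fun i j => if min i.1 j.1 % 2 = 0 then 0 else 1, by
    intro i j
    dsimp only
    rw [min_comm]⟩

lemma cP_proper : IsProperEdgeColoring (pathGraph l) (cP l) := by
  rintro e₁ h₁ e₂ h₂ hne ⟨k, hk₁, hk₂⟩
  obtain ⟨j₁, rfl⟩ := Sym2.mem_iff_exists.mp hk₁
  obtain ⟨j₂, rfl⟩ := Sym2.mem_iff_exists.mp hk₂
  rw [SimpleGraph.mem_edgeSet] at h₁ h₂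
  have ha₁ := pathGraph_adj.mp h₁
  have ha₂ := pathGraph_adj.mp h₂
  have hjne : j₁ ≠ j₂ := by
    intro hcon
    exact hne (by rw [hcon])
  have hjv : j₁.val ≠ j₂.val := fun hcc => hjne (Fin.ext hcc)
  have hm : min k.val j₁.val % 2 ≠ min k.val j₂.val % 2 := by
    rcases ha₁ with ha | ha <;> rcases ha₂ with hb | hb
    · rw [min_eq_left (by omega : k.val ≤ j₁.val), min_eq_left (by omega : k.val ≤ j₂.val)]
      omega
    · rw [min_eq_left (by omega : k.val ≤ j₁.val), min_eq_right (by omega : j₂.val ≤ k.val)]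
      omega
    · rw [min_eq_right (by omega : j₁.val ≤ k.val), min_eq_left (by omega : k.val ≤ j₂.val)]
      omega
    · rw [min_eq_right (by omega : j₁.val ≤ k.val), min_eq_right (by omega : j₂.val ≤ k.val)]
      omega
  show (cP l) s(k, j₁) ≠ (cP l) s(k, j₂)
  rw [cP, Sym2.lift_mk, Sym2.lift_mk]
  dsimp only
  by_cases hc1 : min k.val j₁.val % 2 = 0 <;> by_cases hc2 : min k.val j₂.val % 2 = 0
  · exact absurd (hc1.trans hc2.symm) hm
  · rw [if_pos hc1, if_neg hc2]; decide
  · rw [if_neg hc1, if_pos hc2]; decide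
  · omega

lemma small_pre {β γ : Type*} [Nonempty β] (F : β → γ) (hF : Function.Injective F)
    (P Q : γ) (L : List β) (h : ∀ d ∈ L, F d = P ∨ F d = Q) :
    ∃ X Y : β, ∀ d ∈ L, d = X ∨ d = Y := by
  classical
  by_cases h1 : ∃ d ∈ L, F d = P
  · obtain ⟨X, hXL, hXP⟩ := h1
    by_cases h2 : ∃ d ∈ L, F d = Q
    · obtain ⟨Y, hYL, hYQ⟩ := h2
      refine ⟨X, Y, fun d hd => ?_⟩
      rcases h d hd with hc | hc
      · exact Or.inl (hF (hc.trans hXP.symm))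
      · exact Or.inr (hF (hc.trans hYQ.symm))
    · push_neg at h2
      refine ⟨X, X, fun d hd => ?_⟩
      rcases h d hd with hc | hc
      · exact Or.inl (hF (hc.trans hXP.symm))
      · exact absurd hc (h2 d hd)
  · push_neg at h1
    by_cases h2 : ∃ d ∈ L, F d = Q
    · obtain ⟨Y, hYL, hYQ⟩ := h2
      refine ⟨Y, Y, fun d hd => ?_⟩
      rcases h d hd with hc | hc
      · exact absurd hc (h1 d hd)
      · exact Or.inl (hF (hc.trans hYQ.symm))
    · push_neg at h2
      exact ⟨Classical.arbitrary β, Classical.arbitrary β, fun d hd =>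
        absurd (h d hd) (by push_neg; exact ⟨h1 d hd, h2 d hd⟩)⟩

lemma sym2_fst_inj {k : Fin l} {e f : Sym2 (α × Fin l)}
    (he : ∃ x y : α, e = s((x, k), (y, k))) (hf : ∃ x y : α, f = s((x, k), (y, k)))
    (hne : e ≠ f) : Sym2.map Prod.fst e ≠ Sym2.map Prod.fst f := by
  obtain ⟨x1, y1, rfl⟩ := he
  obtain ⟨x2, y2, rfl⟩ := hf
  intro hcc
  rw [Sym2.map_pair_eq, Sym2.map_pair_eq] at hcc
  dsimp only at hcc
  rcases Sym2.eq_iff.mp hcc with ⟨h1, h2⟩ | ⟨h1, h2⟩ <;> subst h1 <;> subst h2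
  · exact hne rfl
  · exact hne Sym2.eq_swap

lemma sym2_snd_inj {m : α} {e f : Sym2 (α × Fin l)}
    (he : ∃ i j : Fin l, i ≠ j ∧ e = s((m, i), (m, j)))
    (hf : ∃ i j : Fin l, i ≠ j ∧ f = s((m, i), (m, j)))
    (hne : e ≠ f) : Sym2.map Prod.snd e ≠ Sym2.map Prod.snd f := by
  obtain ⟨i1, j1, -, rfl⟩ := he
  obtain ⟨i2, j2, -, rfl⟩ := hf
  intro hcc
  rw [Sym2.map_pair_eq, Sym2.map_pair_eq] at hcc
  dsimp only at hcc
  rcases Sym2.eq_iff.mp hcc with ⟨h1, h2⟩ | ⟨h1, h2⟩ <;> subst h1 <;> subst h2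
  · exact hne rfl
  · exact hne Sym2.eq_swap

end PathCol


section ValLemmas
variable {α : Type*} {l η : ℕ}

lemma pcol_val_lt_of_diag [NeZero η] (c : Sym2 α → Fin η) {e : Sym2 (α × Fin l)}
    (hd : (Sym2.map Prod.snd e).IsDiag) : (pcol c e).val < η := by
  induction e using Sym2.ind with
  | _ u v =>
    rw [Sym2.map_pair_eq, Sym2.mk_isDiag_iff] at hd
    have := pcol_H_lt (l := l) c u.1 v.1 u.2
    rwa [show ((u.1, u.2) : α × Fin l) = u from rfl,
      show ((v.1, u.2) : α × Fin l) = v from by rw [hd]] at this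

lemma pcol_val_ge_of_nondiag [NeZero η] (c : Sym2 α → Fin η) {e : Sym2 (α × Fin l)}
    (hd : ¬ (Sym2.map Prod.snd e).IsDiag) : η ≤ (pcol c e).val := by
  induction e using Sym2.ind with
  | _ u v =>
    rw [Sym2.map_pair_eq, Sym2.mk_isDiag_iff] at hd
    have := pcol_V_ge (l := l) c u.1 v.1 (i := u.2) (j := v.2) hd
    rwa [show ((u.1, u.2) : α × Fin l) = u from rfl,
      show ((v.1, v.2) : α × Fin l) = v from rfl] at this

end ValLemmas

/-- if a'(G) = η ≥ 2 and l ≥ 3 then a'(G □ P_l) ≤ η + 2. -/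
theorem acyclicChromaticIndex_boxProd_pathGraph {α : Type*}
    (G : SimpleGraph α) (η : ℕ) (hη : acyclicChromaticIndex G = η) (h2 : 2 ≤ η)
    (l : ℕ) (hl : 3 ≤ l) :
    acyclicChromaticIndex (G □ pathGraph l) ≤ η + 2 := by

  classical
  haveI : NeZero η := ⟨by omega⟩
  have hSne : {n | ∃ c : Sym2 α → Fin n, IsAcyclicEdgeColoring G c}.Nonempty := by
    by_contra hcon
    rw [Set.not_nonempty_iff_eq_empty] at hcon
    unfold acyclicChromaticIndex at hη
    rw [hcon, Nat.sInf_empty] at hη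
    omega
  have hmem := Nat.sInf_mem hSne
  unfold acyclicChromaticIndex at hη
  rw [hη] at hmem
  obtain ⟨c, hcprop, hcyc3⟩ := hmem
  unfold acyclicChromaticIndex
  apply Nat.sInf_le
  have hproper : IsProperEdgeColoring (G □ pathGraph l) (pcol (l := l) c) :=
    pcol_proper hcprop
  refine ⟨pcol c, hproper, ?_⟩
  intro z w hw
  by_contra hcon
  push_neg at hcon
  have hchainW : List.IsChain (· ≠ ·) w.edges :=
    List.Pairwise.isChain (hw.isCircuit.isTrail.edges_nodup)
  have h3 := hw.three_le_length
  have hedne : w.edges ≠ [] := by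
    intro hcemp
    have := w.length_edges
    rw [hcemp] at this
    simp at this
    omega
  obtain ⟨e₀, he₀⟩ := List.exists_mem_of_ne_nil w.edges hedne
  -- at most two colours on the cycle
  have hcol2 : ∃ Pc Qc : Fin (η + 2), ∀ e ∈ w.edges, pcol c e = Pc ∨ pcol c e = Qc := by
    by_cases hq : ∀ e ∈ w.edges, pcol c e = pcol c e₀
    · exact ⟨pcol c e₀, pcol c e₀, fun e he => Or.inl (hq e he)⟩
    · push_neg at hq
      obtain ⟨e₁, he₁, hne₁⟩ := hq
      refine ⟨pcol c e₀, pcol c e₁, fun e he => ?_⟩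
      by_cases hcc : pcol c e = pcol c e₀
      · exact Or.inl hcc
      · exact Or.inr (hcon e₀ he₀ e₁ he₁ e he (fun h => hne₁ h.symm)
          (fun h => hcc h.symm)).symm
  obtain ⟨Pc, Qc, hPQ⟩ := hcol2
  by_cases hHasV : ∃ e ∈ w.edges, ¬ (Sym2.map Prod.snd e).IsDiag
  · by_cases hHasH : ∃ e ∈ w.edges, (Sym2.map Prod.snd e).IsDiag
    · -- mixed case
      obtain ⟨eV, heV, hdV⟩ := hHasV
      obtain ⟨eH, heH, hdH⟩ := hHasH
      set X := pcol c eH with hXdef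
      set Y := pcol c eV with hYdef
      have hXlt : X.val < η := pcol_val_lt_of_diag c hdH
      have hYge : η ≤ Y.val := pcol_val_ge_of_nondiag c hdV
      have hXY : X ≠ Y := by
        intro hcc
        rw [hcc] at hXlt
        omega
      have hcolXY : ∀ e ∈ w.edges, pcol c e = X ∨ pcol c e = Y := by
        intro e he
        rcases hPQ e he with h | h <;> rcases hPQ eH heH with h1 | h1 <;>
          rcases hPQ eV heV with h2 | h2 <;>
          first
            | exact Or.inl (h.trans h1.symm)
            | exact Or.inr (h.trans h2.symm)
            | exact absurd (h1.trans h2.symm) hXY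
      set x' : Fin η := ⟨X.val, hXlt⟩ with hx'def
      have hXcast : X = Fin.castLE (by omega) x' := Fin.ext rfl
      have hcolM : ∀ e ∈ w.edges, pcol c e = Fin.castLE (by omega) x' ∨ pcol c e = Y := by
        intro e he
        rcases hcolXY e he with h | h
        · exact Or.inl (by rw [← hXcast]; exact h)
        · exact Or.inr h
      obtain ⟨qM, hqMe, hqMchain, -⟩ := projM h2 hproper x' Y hYge w hcolM hchainW
      have hqMne : qM.edges ≠ [] := by
        have hmm : Sym2.map Prod.fst eH ∈ qM.edges := by
          rw [hqMe]
          exact List.mem_filterMap.mpr ⟨eH, heH, by rw [if_pos hdH]⟩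
        intro hcemp
        rw [hcemp] at hmm
        simp at hmm
      have hqMcol : ∀ e ∈ qM.edges, c e = x' ∨ c e = x' - 1 := by
        intro e he
        rw [hqMe] at he
        obtain ⟨E, hEw, hfE⟩ := List.mem_filterMap.mp he
        by_cases hdE : (Sym2.map Prod.snd E).IsDiag
        case neg => rw [if_neg hdE] at hfE; simp at hfE
        rw [if_pos hdE] at hfE
        revert hdE hfE
        induction E using Sym2.ind with
        | _ u v =>
          intro hfE hdE
          rw [Sym2.map_pair_eq, Sym2.mk_isDiag_iff] at hdE
          simp only [Sym2.map_pair_eq, Option.some_inj] at hfE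
          have hEcol : pcol c s(u, v) =
              Fin.castLE (by omega) (c s(u.1, v.1) + shiftF η u.2) := by
            have := pcol_H (l := l) c u.1 v.1 u.2
            rwa [show ((u.1, u.2) : α × Fin l) = u from rfl,
              show ((v.1, u.2) : α × Fin l) = v from by rw [hdE]] at this
          have hcast : Fin.castLE (by omega : η ≤ η + 2) (c s(u.1, v.1) + shiftF η u.2) =
              Fin.castLE (by omega) x' := by
            rcases hcolM _ hEw with hcc | hcc
            · rw [← hEcol]; exact hcc
            · exfalso
              have hval := congrArg Fin.val (hEcol.symm.trans hcc)
              have := (c s(u.1, v.1) + shiftF η u.2).isLt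
              simp only [Fin.coe_castLE] at hval
              omega
          have hsum : c s(u.1, v.1) + shiftF η u.2 = x' :=
            Fin.castLE_injective (by omega) hcast
          rw [← hfE]
          by_cases hpar : u.2.val % 2 = 0
          · left
            rw [shiftF, if_pos hpar, add_zero] at hsum
            exact hsum
          · right
            rw [shiftF, if_neg hpar] at hsum
            exact eq_sub_of_add_eq hsum
      have hqMchain' : List.IsChain (· ≠ ·) qM.edges :=
        List.IsChain.imp (fun _ _ h hEq => h (by rw [hEq])) hqMchain
      exact core_aux hcprop hcyc3 x' (x' - 1) qM.length z.1 qM rfl hqMne hqMcol hqMchain'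
    · -- all-vertical case
      push_neg at hHasH
      obtain ⟨-, hforms, qV, hqVe⟩ := projV w hHasH
      have hqVne : qV.edges ≠ [] := by
        rw [hqVe]
        simp [hedne]
      have hqVchain : List.IsChain (· ≠ ·) qV.edges := by
        rw [hqVe]
        exact chain'_map_ne _ _ hforms hchainW (fun a b ha hb hne => sym2_snd_inj ha hb hne)
      have hqVcol : ∀ e ∈ qV.edges, cP l e = 0 ∨ cP l e = 1 := by
        intro e _
        have : ∀ t : Fin 2, t = 0 ∨ t = 1 := by decide
        exact this _
      exact core_aux cP_proper (fun v w' hcyc => (pathGraph_no_cycle w' hcyc).elim)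
        0 1 qV.length z.2 qV rfl hqVne hqVcol hqVchain
  · -- all-horizontal case
    push_neg at hHasV
    have hAllH : ∀ e ∈ w.edges, (Sym2.map Prod.snd e).IsDiag := hHasV
    obtain ⟨-, hforms, qA, hqAe⟩ := projA w hAllH
    haveI : Nonempty (Fin η) := ⟨⟨0, by omega⟩⟩
    have hFinj : Function.Injective
        (fun d : Fin η => Fin.castLE (by omega : η ≤ η + 2) (d + shiftF η z.2)) := by
      intro d₁ d₂ hd
      have := Fin.castLE_injective (by omega : η ≤ η + 2) hd
      exact add_right_cancel this
    have hmapcol : ∀ d ∈ qA.edges.map c,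
        (fun d : Fin η => Fin.castLE (by omega : η ≤ η + 2) (d + shiftF η z.2)) d = Pc ∨
        (fun d : Fin η => Fin.castLE (by omega : η ≤ η + 2) (d + shiftF η z.2)) d = Qc := by
      intro d hd
      obtain ⟨e, he, rfl⟩ := List.mem_map.mp hd
      rw [hqAe] at he
      obtain ⟨E, hEw, hfE⟩ := List.mem_map.mp he
      obtain ⟨x, y, hform⟩ := hforms E hEw
      have hfE' : e = s(x, y) := by
        rw [← hfE, hform, Sym2.map_pair_eq]
      have hpc : pcol c E = Fin.castLE (by omega) (c e + shiftF η z.2) := by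
        rw [hform, pcol_H, hfE']
      dsimp only
      rw [← hpc]
      exact hPQ E hEw
    obtain ⟨X, Y, hsmall⟩ := small_pre _ hFinj Pc Qc (qA.edges.map c) hmapcol
    have hqAcol : ∀ e ∈ qA.edges, c e = X ∨ c e = Y := by
      intro e he
      exact hsmall (c e) (List.mem_map.mpr ⟨e, he, rfl⟩)
    have hqAne : qA.edges ≠ [] := by
      rw [hqAe]
      simp [hedne]
    have hqAchain : List.IsChain (· ≠ ·) qA.edges := by
      rw [hqAe]
      exact chain'_map_ne _ _ hforms hchainW (fun a b ha hb hne => sym2_fst_inj ha hb hne)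
    exact core_aux hcprop hcyc3 X Y qA.length z.1 qA rfl hqAne hqAcol hqAchain
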